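/- arXiv:2005.08030 — 2 statements merged into one kernel-verified Lean document; each statement's English description precedes it below -/
import Mathlib

section
/- For the Hegselmann-Krause system with distributed delay dx_i/dt = (1/(N h(t))) Σ_{j≠i} ∫_{t-τ(t)}^t α(t-s) a_{ij}(t;s)(x_j(s) - x_i(t)) ds, with initial data x_i(s) = x_{i,0}(s) continuous on [-τ(0),0], and setting R := max_{s∈[-τ(0),0]} max_i |x_i(s)|, every solution satisfies max_i |x_i(t)| ≤ R for all t ≥ 0. -/
open Filter Set MeasureTheory intervalIntegral Topology

set_option maxHeartbeats 2000000

local notation "⟪" x ", " y "⟫" => @inner ℝ _ _ x y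

/-- If `f` has negative derivative at `T > 0`, `f T = 0`, and `f ≤ 0` on `[0, T)`,
we get a contradiction. -/
lemma touch_contradiction {f : ℝ → ℝ} {D T : ℝ} (hT : 0 < T)
    (hf : HasDerivAt f D T) (hD : D < 0) (hfT : f T = 0)
    (hle : ∀ t, 0 ≤ t → t < T → f t ≤ 0) : False := by
  rw [hasDerivAt_iff_tendsto_slope] at hf
  have h1 : Tendsto (slope f T) (𝓝[<] T) (𝓝 D) :=
    hf.mono_left (nhdsWithin_mono _ (fun t ht => ht.ne))
  have h2 : ∀ᶠ t in 𝓝[<] T, slope f T t < 0 := h1.eventually (Iio_mem_nhds hD)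
  have h3 : Ioo 0 T ∈ 𝓝[<] T := Ioo_mem_nhdsLT hT
  rcases (h2.and (eventually_of_mem h3 fun t ht => ht)).exists with ⟨t, hst, ht0, htT⟩
  have hslope : (f t - f T) / (t - T) < 0 := by
    simpa [slope_def_field, div_eq_inv_mul] using hst
  rw [hfT, sub_zero] at hslope
  rcases div_neg_iff.mp hslope with ⟨hf1, hf2⟩ | ⟨hf1, hf2⟩
  · linarith [hle t ht0.le htT]
  · linarith

theorem stmt1 (d N : ℕ) (hN : 0 < N)
    (x : Fin N → ℝ → EuclideanSpace ℝ (Fin d))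
    (τ : ℝ → ℝ) (τstar : ℝ) (α : ℝ → ℝ)
    (a : Fin N → Fin N → ℝ → ℝ → ℝ) (R : ℝ)
    (hτpos : ∀ t ≥ (0:ℝ), τstar ≤ τ t) (hτstar : 0 < τstar)
    (hτmono : ∀ s t, (0:ℝ) ≤ s → s ≤ t → τ t ≤ τ s)
    (hα : ∀ s ∈ Set.Icc (0:ℝ) (τ 0), 0 ≤ α s)
    (hA : 0 < ∫ s in (0:ℝ)..τstar, α s)
    (ha_nonneg : ∀ i j t s, 0 ≤ a i j t s)
    (ha_bound : ∀ i t s, (1 / (N:ℝ)) * ∑ j, a i j t s ≤ 1)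
    -- the delayed Hegselmann–Krause dynamics, with h(t) = ∫_0^{τ(t)} α
    (hODE : ∀ i, ∀ t ≥ (0:ℝ), HasDerivAt (x i)
      ((1 / ((N:ℝ) * ∫ σ in (0:ℝ)..τ t, α σ)) •
        ∑ j ∈ Finset.univ.erase i,
          ∫ s in (t - τ t)..t, (α (t - s) * a i j t s) • (x j s - x i t)) t)
    -- continuity of the initial data and of the solution
    (hcont : ∀ i, Continuous (x i))
    -- R is (an upper bound for) the max of the initial data
    (hR : ∀ s ∈ Set.Icc (-τ 0) 0, ∀ i, ‖x i s‖ ≤ R) :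
    ∀ t ≥ (0:ℝ), ∀ i, ‖x i t‖ ≤ R := by
  by_contra hcon
  push_neg at hcon
  obtain ⟨t₀, ht₀, i₀, hB⟩ := hcon
  have hτ0 : 0 < τ 0 := hτstar.trans_le (hτpos 0 le_rfl)
  have hR0 : 0 ≤ R :=
    (norm_nonneg _).trans (hR 0 ⟨by linarith, le_rfl⟩ ⟨0, hN⟩)
  set B := ‖x i₀ t₀‖ with hBdef
  set ε := (B - R) / 2 with hεdef
  have hε : 0 < ε := by simp only [hεdef]; linarith
  have hRε : 0 < R + ε := by linarith
  have hBgt : R + ε < B := by simp only [hεdef]; linarith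
  set lam := Real.log (B / (R + ε)) / (t₀ + 1) with hlamdef
  have hBrat : 1 < B / (R + ε) := (one_lt_div hRε).mpr hBgt
  have hlam : 0 < lam := div_pos (Real.log_pos hBrat) (by linarith)
  set g : ℝ → ℝ := fun t => (R + ε) * Real.exp (lam * t) with hgdef
  have hgcont : Continuous g := by continuity
  have hg_pos : ∀ t, 0 < g t := fun t => mul_pos hRε (Real.exp_pos _)
  have hg_mono : ∀ s t : ℝ, s ≤ t → g s ≤ g t := by
    intro s t hst
    exact mul_le_mul_of_nonneg_left
      (Real.exp_le_exp.mpr (mul_le_mul_of_nonneg_left hst hlam.le)) hRε.le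
  have hg_geR : ∀ t : ℝ, 0 ≤ t → R + ε ≤ g t := by
    intro t ht
    have : (1:ℝ) ≤ Real.exp (lam * t) := Real.one_le_exp (mul_nonneg hlam.le ht)
    calc R + ε = (R + ε) * 1 := (mul_one _).symm
    _ ≤ g t := mul_le_mul_of_nonneg_left this hRε.le
  have hgt₀ : g t₀ < B := by
    have h1 : lam * t₀ < Real.log (B / (R + ε)) := by
      have : lam * t₀ < lam * (t₀ + 1) := by
        apply mul_lt_mul_of_pos_left (by linarith) hlam
      calc lam * t₀ < lam * (t₀ + 1) := this
      _ = Real.log (B / (R + ε)) := by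
        rw [hlamdef]; exact div_mul_cancel₀ _ (ne_of_gt (by linarith))
    have h2 : Real.exp (lam * t₀) < B / (R + ε) := by
      calc Real.exp (lam * t₀) < Real.exp (Real.log (B / (R + ε))) :=
            Real.exp_lt_exp.mpr h1
      _ = B / (R + ε) := Real.exp_log (by positivity)
    calc g t₀ = (R + ε) * Real.exp (lam * t₀) := rfl
    _ < (R + ε) * (B / (R + ε)) := mul_lt_mul_of_pos_left h2 hRε
    _ = B := by field_simp
  -- the touching set
  set S : Set ℝ := {t | t ∈ Icc 0 t₀ ∧ ∃ i, g t ≤ ‖x i t‖} with hSdef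
  have hSne : t₀ ∈ S := ⟨⟨ht₀, le_rfl⟩, i₀, hgt₀.le⟩
  have hSclosed : IsClosed S := by
    have : S = Icc 0 t₀ ∩ ⋃ i : Fin N, {t | g t ≤ ‖x i t‖} := by
      ext t; simp [hSdef, Set.mem_iUnion, and_comm]
    rw [this]
    exact isClosed_Icc.inter (isClosed_iUnion_of_finite fun i =>
      isClosed_le hgcont (hcont i).norm)
  have hSbdd : BddBelow S := ⟨0, fun t ht => ht.1.1⟩
  set T := sInf S with hTdef
  have hTS : T ∈ S := hSclosed.csInf_mem ⟨t₀, hSne⟩ hSbdd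
  obtain ⟨⟨hT0, hTt₀⟩, i, hiT⟩ := hTS
  have hbefore : ∀ t, 0 ≤ t → t < T → ∀ j, ‖x j t‖ < g t := by
    intro t ht htT j
    by_contra h
    push_neg at h
    have hmem : t ∈ S := ⟨⟨ht, htT.le.trans hTt₀⟩, j, h⟩
    exact absurd (csInf_le hSbdd hmem) (not_le.mpr htT)
  have hTpos : 0 < T := by
    rcases hT0.lt_or_eq with h | h
    · exact h
    · exfalso
      have h1 : ‖x i 0‖ ≤ R := hR 0 ⟨by linarith, le_rfl⟩ i
      have h2 : g 0 = R + ε := by simp [hgdef]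
      rw [← h] at hiT
      rw [h2] at hiT
      linarith
  -- left-limit bound at T
  have hatT : ∀ j, ‖x j T‖ ≤ g T := by
    intro j
    have hne : (𝓝[<] T).NeBot := nhdsLT_neBot T
    have h1 : Tendsto (fun t => ‖x j t‖ - g t) (𝓝[<] T) (𝓝 (‖x j T‖ - g T)) :=
      (((hcont j).norm.sub hgcont).tendsto T).mono_left nhdsWithin_le_nhds
    have h2 : ∀ᶠ t in 𝓝[<] T, ‖x j t‖ - g t ≤ 0 := by
      filter_upwards [Ioo_mem_nhdsLT hTpos] with t ht
      linarith [hbefore t ht.1.le ht.2 j]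
    linarith [le_of_tendsto h1 h2]
  have hxiT : ‖x i T‖ = g T := le_antisymm (hatT i) hiT
  -- all relevant past values are bounded by g T
  have hτT0 : τ T ≤ τ 0 := hτmono 0 T le_rfl hT0
  have hτTpos : 0 < τ T := hτstar.trans_le (hτpos T hT0)
  have hpast : ∀ j, ∀ s, T - τ T ≤ s → s ≤ T → ‖x j s‖ ≤ g T := by
    intro j s hs1 hs2
    rcases lt_or_ge s 0 with h0 | h0
    · have hs3 : -τ 0 ≤ s := by linarith
      exact (hR s ⟨hs3, le_of_lt h0⟩ j).trans (by linarith [hg_geR T hT0])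
    · rcases hs2.lt_or_eq with h | h
      · exact (hbefore s h0 h j).le.trans (hg_mono s T hs2)
      · rw [h]; exact hatT j
  -- the drift coefficient is nonnegative
  have hcoef : 0 ≤ 1 / ((N:ℝ) * ∫ σ in (0:ℝ)..τ T, α σ) := by
    apply one_div_nonneg.mpr
    apply mul_nonneg (Nat.cast_nonneg N)
    apply intervalIntegral.integral_nonneg hτTpos.le
    intro u hu
    exact hα u ⟨hu.1, hu.2.trans hτT0⟩
  -- the inner product of the velocity with x i T is nonpositive
  set u : EuclideanSpace ℝ (Fin d) := x i T with hudef
  set v : EuclideanSpace ℝ (Fin d) :=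
    (1 / ((N:ℝ) * ∫ σ in (0:ℝ)..τ T, α σ)) •
      ∑ j ∈ Finset.univ.erase i,
        ∫ s in (T - τ T)..T, (α (T - s) * a i j T s) • (x j s - x i T) with hvdef
  have hab : T - τ T ≤ T := by linarith
  have hterm : ∀ j,
      ⟪u, ∫ s in (T - τ T)..T, (α (T - s) * a i j T s) • (x j s - x i T)⟫ ≤ 0 := by
    intro j
    set F : ℝ → EuclideanSpace ℝ (Fin d) :=
      fun s => (α (T - s) * a i j T s) • (x j s - x i T) with hFdef
    by_cases hint : IntervalIntegrable F volume (T - τ T) T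
    · have hcomm := (innerSL ℝ u).intervalIntegral_comp_comm hint
      have heq : ⟪u, ∫ s in (T - τ T)..T, F s⟫
          = ∫ s in (T - τ T)..T, ⟪u, F s⟫ := by
        exact hcomm.symm
      rw [heq]
      rw [← neg_nonneg, ← intervalIntegral.integral_neg]
      apply intervalIntegral.integral_nonneg hab
      intro s hs
      rw [neg_nonneg]
      have hc : 0 ≤ α (T - s) * a i j T s := by
        apply mul_nonneg _ (ha_nonneg i j T s)
        apply hα
        constructor
        · linarith [hs.2]
        · linarith [hs.1]
      have hinner : ⟪u, x j s - x i T⟫ ≤ 0 := by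
        rw [inner_sub_right]
        have h1 : ⟪u, x j s⟫ ≤ ‖u‖ * ‖x j s‖ := real_inner_le_norm u (x j s)
        have h2 : ⟪u, x i T⟫ = ‖u‖ * ‖u‖ := by
          rw [← hudef, real_inner_self_eq_norm_mul_norm]
        have h3 : ‖x j s‖ ≤ ‖u‖ := by
          rw [hudef, hxiT]; exact hpast j s hs.1 hs.2
        have h4 : ‖u‖ * ‖x j s‖ ≤ ‖u‖ * ‖u‖ :=
          mul_le_mul_of_nonneg_left h3 (norm_nonneg _)
        rw [h2]; linarith
      have : ⟪u, F s⟫ = (α (T - s) * a i j T s) * ⟪u, x j s - x i T⟫ := by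
        rw [hFdef]; exact real_inner_smul_right _ _ _
      rw [this]
      calc (α (T - s) * a i j T s) * ⟪u, x j s - x i T⟫
          ≤ (α (T - s) * a i j T s) * 0 := mul_le_mul_of_nonneg_left hinner hc
      _ = 0 := mul_zero _
    · rw [intervalIntegral.integral_undef hint, inner_zero_right]
  have hvu : ⟪u, v⟫ ≤ 0 := by
    rw [hvdef, real_inner_smul_right, inner_sum]
    calc (1 / ((N:ℝ) * ∫ σ in (0:ℝ)..τ T, α σ)) *
          ∑ j ∈ Finset.univ.erase i,
            ⟪u, ∫ s in (T - τ T)..T, (α (T - s) * a i j T s) • (x j s - x i T)⟫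
        ≤ (1 / ((N:ℝ) * ∫ σ in (0:ℝ)..τ T, α σ)) * 0 := by
          apply mul_le_mul_of_nonneg_left _ hcoef
          exact Finset.sum_nonpos fun j _ => hterm j
    _ = 0 := mul_zero _
  -- derivative of the comparison function
  have hder : HasDerivAt (x i) v T := hODE i T hT0
  have hinner_der : HasDerivAt (fun t => ⟪x i t, x i t⟫) (⟪x i T, v⟫ + ⟪v, x i T⟫) T :=
    HasDerivAt.inner ℝ hder hder
  have hlamT : HasDerivAt (fun t : ℝ => lam * t) lam T := by
    simpa using (hasDerivAt_id T).const_mul lam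
  have hexp : HasDerivAt (fun t : ℝ => Real.exp (lam * t))
      (Real.exp (lam * T) * lam) T := hlamT.exp
  have hg_der : HasDerivAt g ((R + ε) * (Real.exp (lam * T) * lam)) T :=
    hexp.const_mul (R + ε)
  have hg2_der : HasDerivAt (fun t => g t ^ 2)
      (2 * g T ^ 1 * ((R + ε) * (Real.exp (lam * T) * lam))) T := hg_der.pow 2
  set D : ℝ := (⟪x i T, v⟫ + ⟪v, x i T⟫)
      - 2 * g T ^ 1 * ((R + ε) * (Real.exp (lam * T) * lam)) with hDdef
  have hf_der : HasDerivAt (fun t => ⟪x i t, x i t⟫ - g t ^ 2) D T :=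
    hinner_der.sub hg2_der
  have hD : D < 0 := by
    have hsym : ⟪v, x i T⟫ = ⟪x i T, v⟫ := real_inner_comm (x i T) v
    have h1 : ⟪x i T, v⟫ ≤ 0 := hvu
    have h2 : 0 < 2 * g T ^ 1 * ((R + ε) * (Real.exp (lam * T) * lam)) := by
      have hg := hg_pos T
      have hprod : 0 < (R + ε) * (Real.exp (lam * T) * lam) :=
        mul_pos hRε (mul_pos (Real.exp_pos _) hlam)
      have : g T ^ 1 = g T := pow_one _
      rw [this]
      exact mul_pos (by linarith) hprod
    rw [hDdef, hsym]
    linarith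
  have hfT : ⟪x i T, x i T⟫ - g T ^ 2 = 0 := by
    rw [real_inner_self_eq_norm_sq, hxiT]
    ring
  have hfle : ∀ t, 0 ≤ t → t < T → ⟪x i t, x i t⟫ - g t ^ 2 ≤ 0 := by
    intro t ht htT
    rw [real_inner_self_eq_norm_sq]
    have h1 : ‖x i t‖ < g t := hbefore t ht htT i
    nlinarith [norm_nonneg (x i t)]
  exact touch_contradiction hTpos hf_der hD hfT hfle
end

section
/- Let x_1,…,x_N ∈ ℝ^d with diameter d_X := max_{k,l}|x_k - x_l| attained at the pair (i,j), and let ψ_0 ∈ (0,1] satisfy ψ_0 ≤ a_k ≤ 1/ψ_0 for given coefficients a_k. Then (1/N) Σ_{k=1}^N a_k ⟨x_i - x_j, x_k - x_i⟩ ≤ ψ_0 (1/N) Σ_{k=1}^N ⟨x_i - x_j, x_k - x_i⟩, and the symmetric sum over both agents yields (1/N) Σ_k a_k (⟨x_i - x_j, x_k - x_i⟩ + ⟨x_i - x_j, x_j - x_k⟩) ≤ -ψ_0 |x_i - x_j|^2. -/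
theorem stmt5 (d N : ℕ) (hN : 0 < N)
    (x : Fin N → EuclideanSpace ℝ (Fin d)) (i j : Fin N)
    (hmax : ∀ k l, ‖x k - x l‖ ≤ ‖x i - x j‖)
    (ψ₀ : ℝ) (hψ₀ : 0 < ψ₀ ∧ ψ₀ ≤ 1)
    (a : Fin N → ℝ) (ha : ∀ k, ψ₀ ≤ a k ∧ a k ≤ 1 / ψ₀) :
    (1 / (N:ℝ)) * ∑ k, a k * inner ℝ (x i - x j) (x k - x i) ≤
      ψ₀ * ((1 / (N:ℝ)) * ∑ k, inner ℝ (x i - x j) (x k - x i)) ∧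
    (1 / (N:ℝ)) * ∑ k, a k *
        ((inner ℝ (x i - x j) (x k - x i) : ℝ) + inner ℝ (x i - x j) (x j - x k)) ≤
      -ψ₀ * ‖x i - x j‖ ^ 2 := by
  obtain ⟨hψpos, hψle⟩ := hψ₀
  have hNpos : (0:ℝ) < (N:ℝ) := by exact_mod_cast hN
  have hinv : (0:ℝ) ≤ 1 / (N:ℝ) := by positivity
  set v := x i - x j with hv
  have hvn : ‖v‖ = ‖x i - x j‖ := rfl
  have h1 : ∀ k, (inner ℝ v (x k - x i) : ℝ) ≤ 0 := by
    intro k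
    have hd : x k - x i = (x k - x j) - (x i - x j) := by abel
    have hcs : (inner ℝ v (x k - x j) : ℝ) ≤ ‖v‖ * ‖x k - x j‖ := real_inner_le_norm _ _
    have hle : ‖v‖ * ‖x k - x j‖ ≤ ‖v‖ * ‖v‖ :=
      mul_le_mul_of_nonneg_left (hmax k j) (norm_nonneg _)
    have : (inner ℝ v (x k - x i) : ℝ) = inner ℝ v (x k - x j) - inner ℝ v v := by
      rw [hd, inner_sub_right]
    rw [this, real_inner_self_eq_norm_mul_norm]
    linarith
  have h2 : ∀ k, (inner ℝ v (x j - x k) : ℝ) ≤ 0 := by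
    intro k
    have hd : x j - x k = (x i - x k) - (x i - x j) := by abel
    have hcs : (inner ℝ v (x i - x k) : ℝ) ≤ ‖v‖ * ‖x i - x k‖ := real_inner_le_norm _ _
    have hle : ‖v‖ * ‖x i - x k‖ ≤ ‖v‖ * ‖v‖ :=
      mul_le_mul_of_nonneg_left (hmax i k) (norm_nonneg _)
    have : (inner ℝ v (x j - x k) : ℝ) = inner ℝ v (x i - x k) - inner ℝ v v := by
      rw [hd, inner_sub_right]
    rw [this, real_inner_self_eq_norm_mul_norm]
    linarith
  have key : ∀ (t : Fin N → ℝ), (∀ k, t k ≤ 0) →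
      ∑ k, a k * t k ≤ ∑ k, ψ₀ * t k := by
    intro t ht
    refine Finset.sum_le_sum fun k _ => ?_
    exact mul_le_mul_of_nonpos_right (ha k).1 (ht k)
  constructor
  · have := key (fun k => inner ℝ v (x k - x i)) h1
    have h := mul_le_mul_of_nonneg_left this hinv
    calc (1 / (N:ℝ)) * ∑ k, a k * inner ℝ v (x k - x i)
        ≤ (1 / (N:ℝ)) * ∑ k, ψ₀ * inner ℝ v (x k - x i) := h
      _ = ψ₀ * ((1 / (N:ℝ)) * ∑ k, inner ℝ v (x k - x i)) := by
          rw [← Finset.mul_sum]; ring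
  · have ht : ∀ k, (inner ℝ v (x k - x i) : ℝ) + inner ℝ v (x j - x k) ≤ 0 := fun k =>
      add_nonpos (h1 k) (h2 k)
    have := key (fun k => (inner ℝ v (x k - x i) : ℝ) + inner ℝ v (x j - x k)) ht
    have h := mul_le_mul_of_nonneg_left this hinv
    have hsum : ∑ k : Fin N, ((inner ℝ v (x k - x i) : ℝ) + inner ℝ v (x j - x k))
        = -((N:ℝ) * ‖v‖ ^ 2) := by
      have : ∀ k : Fin N, (inner ℝ v (x k - x i) : ℝ) + inner ℝ v (x j - x k)
          = -‖v‖ ^ 2 := by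
        intro k
        have : (inner ℝ v (x k - x i) : ℝ) + inner ℝ v (x j - x k)
            = inner ℝ v ((x k - x i) + (x j - x k)) := (inner_add_right _ _ _).symm
        rw [this]
        have hd : (x k - x i) + (x j - x k) = -(x i - x j) := by abel
        rw [hd, inner_neg_right, ← hv, real_inner_self_eq_norm_sq]
      rw [Finset.sum_congr rfl fun k _ => this k, Finset.sum_const, Finset.card_univ,
        Fintype.card_fin, nsmul_eq_mul]
      ring
    calc (1 / (N:ℝ)) * ∑ k, a k * ((inner ℝ v (x k - x i) : ℝ) + inner ℝ v (x j - x k))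
        ≤ (1 / (N:ℝ)) * ∑ k, ψ₀ * ((inner ℝ v (x k - x i) : ℝ) + inner ℝ v (x j - x k)) := h
      _ = (1 / (N:ℝ)) * (ψ₀ * ∑ k, ((inner ℝ v (x k - x i) : ℝ) + inner ℝ v (x j - x k))) := by
          simp [Finset.mul_sum]
      _ = -ψ₀ * ‖v‖ ^ 2 := by
          rw [hsum]; field_simp
end
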